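/- Let α > 0, let A generate an α-times resolvent family S_α on a complex Banach space X, and let n ∈ ℕ with nα ≥ 1. Then for every x ∈ D(Aⁿ), the map t ↦ S_α(t)x is differentiable on (0,∞) and (d/dt)(S_α(t)x) = Σ_{k=1}^{n−1} g_{kα}(t) A^k x + (g_{nα−1} * S_α)(t) Aⁿ x for all t > 0. -/

import Mathlib

open MeasureTheory Filter Set Topology Metric
open scoped Real Topology ENNReal

attribute [local instance] Classical.propDecidable
noncomputable section

variable {X : Type*} [NormedAddCommGroup X] [NormedSpace ℂ X] [CompleteSpace X]

/-- The kernel `g_β(t) = t^(β-1)/Γ(β)` for `t ≥ 0`, and `0` for `t < 0`. -/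
def gk (β t : ℝ) : ℝ := if 0 ≤ t then t ^ (β - 1) / Real.Gamma β else 0

/-- Application of a partial (unbounded) linear operator, extended by `0` off its domain. -/
def pApply (A : X →ₗ.[ℂ] X) (x : X) : X := if h : x ∈ A.domain then A ⟨x, h⟩ else 0

/-- The negative `-A` of a partial linear operator. -/
def negP (A : X →ₗ.[ℂ] X) : X →ₗ.[ℂ] X := { domain := A.domain, toFun := -A.toFun }

/-- `R` is the resolvent operator `(μ - A)⁻¹` of `A` at `μ`. -/
def IsResolventOp (A : X →ₗ.[ℂ] X) (μ : ℂ) (R : X →L[ℂ] X) : Prop :=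
  (∀ y : X, ∃ hy : R y ∈ A.domain, μ • R y - A ⟨R y, hy⟩ = y) ∧
  (∀ x : X, ∀ hx : x ∈ A.domain, R (μ • x - A ⟨x, hx⟩) = x)

def pResolventSet (A : X →ₗ.[ℂ] X) : Set ℂ := {μ | ∃ R, IsResolventOp A μ R}

def resolventOf (A : X →ₗ.[ℂ] X) (μ : ℂ) : X →L[ℂ] X :=
  if h : ∃ R, IsResolventOp A μ R then h.choose else 0

/-- The open sector `Σ_ω` of half-angle `ω` around the positive axis. -/
def sector (ω : ℝ) : Set ℂ :=
  if ω = 0 then {z : ℂ | 0 < z.re ∧ z.im = 0} else {z : ℂ | z ≠ 0 ∧ |z.arg| < ω}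

/-- `A` is a (densely defined, closed) sectorial operator of angle `ω`. -/
def IsSectorial (A : X →ₗ.[ℂ] X) (ω : ℝ) : Prop :=
  Dense (A.domain : Set X) ∧ IsClosed (A.graph : Set (X × X)) ∧
  (pResolventSet A)ᶜ ⊆ closure (sector ω) ∧
  ∀ ω' ∈ Ioo ω π, ∃ M : ℝ, ∀ z ∈ (closure (sector ω'))ᶜ, ‖z • resolventOf A z‖ ≤ M

/-- `S` is an `α`-times resolvent family generated by `A`. -/
def IsResolventFamily (α : ℝ) (A : X →ₗ.[ℂ] X) (S : ℝ → X →L[ℂ] X) : Prop :=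
  (∀ x : X, ContinuousOn (fun t => S t x) (Ici 0)) ∧
  S 0 = ContinuousLinearMap.id ℂ X ∧
  (∀ t ∈ Ici (0:ℝ), ∀ x : X, ∀ hx : x ∈ A.domain,
      ∃ h2 : S t x ∈ A.domain, A ⟨S t x, h2⟩ = S t (A ⟨x, hx⟩)) ∧
  (∀ t ∈ Ici (0:ℝ), ∀ x : X, ∀ hx : x ∈ A.domain,
      S t x = x + ∫ s in (0:ℝ)..t, gk α (t - s) • S s (A ⟨x, hx⟩))

/-- `A ∈ 𝒜_α(θ₀)`: `A` generates an `α`-times resolvent family which extends analytically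
to the sector `Σ_{θ₀}` and is bounded on each smaller sector. -/
def InAnalyticClass (α : ℝ) (A : X →ₗ.[ℂ] X) (θ₀ : ℝ) : Prop :=
  ∃ (S : ℝ → X →L[ℂ] X) (T : ℂ → X →L[ℂ] X),
    IsResolventFamily α A S ∧
    DifferentiableOn ℂ T (sector θ₀) ∧
    (∀ t : ℝ, 0 < t → T t = S t) ∧
    ∀ θ ∈ Ioo 0 θ₀, ∃ M : ℝ, ∀ z ∈ sector θ, ‖T z‖ ≤ M

def cray (r φ : ℝ) : ℂ := (r : ℂ) * Complex.exp ((φ : ℂ) * Complex.I)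

/-- Integral over the keyhole contour from `∞e^{-iφ}` to `∞e^{iφ}` (the two rays of modulus
`≥ d`, avoiding the origin via the arc of radius `d`), of an operator-valued function. -/
def keyhole (G : ℂ → X →L[ℂ] X) (φ d : ℝ) : X →L[ℂ] X :=
  (∫ r in Ioi d, Complex.exp ((φ : ℂ) * Complex.I) • G (cray r φ)) -
  (∫ r in Ioi d, Complex.exp (-(φ : ℂ) * Complex.I) • G (cray r (-φ))) +
  (∫ θ in Ioo (-φ) φ, (Complex.I * cray d θ) • G (cray d θ))

/-- `A^{-b}`, via the contour integral `-(2πi)⁻¹ ∫_{Γ(ζ)} λ^{-b} (λ - A)⁻¹ dλ`. -/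
def negFracPow (A : X →ₗ.[ℂ] X) (b ζ d : ℝ) : X →L[ℂ] X :=
  (-(2 * (π : ℂ) * Complex.I)⁻¹) • keyhole (fun μ => (μ ^ (-(b : ℂ))) • resolventOf A μ) ζ d

/-- `A^b := (A^{-b})⁻¹`, as a partial linear operator (for `0 ∈ ρ(A)`), defined through the
inverse (flipped) graph of the bounded operator `A^{-b}`. -/
def fracPowC (A : X →ₗ.[ℂ] X) (b ζ d : ℝ) : X →ₗ.[ℂ] X :=
  (Submodule.map ((LinearEquiv.prodComm ℂ X X).toLinearMap)
    (LinearMap.graph ((negFracPow A b ζ d : X →L[ℂ] X) : X →ₗ[ℂ] X))).toLinearPMap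

/-- `A^b` with a canonical choice of the inner radius of the contour. -/
def fracPowC' (A : X →ₗ.[ℂ] X) (b ζ : ℝ) : X →ₗ.[ℂ] X :=
  if h : ∃ d : ℝ, 0 < d ∧ closedBall (0 : ℂ) d ⊆ pResolventSet A
  then fracPowC A b ζ h.choose
  else (⊥ : Submodule ℂ (X × X)).toLinearPMap

/-- The shifted operator `A + ε`. -/
def shiftOp (A : X →ₗ.[ℂ] X) (ε : ℝ) : X →ₗ.[ℂ] X :=
  { domain := A.domain
    toFun := A.toFun + (ε : ℂ) • A.domain.subtype }

/-- The fractional power `A^b` in general: the strong limit of `(A + ε)^b` as `ε → 0⁺`. -/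
def fracPow (A : X →ₗ.[ℂ] X) (b ζ : ℝ) : X →ₗ.[ℂ] X :=
  (Submodule.span ℂ {p : X × X |
    Tendsto (fun ε : ℝ => pApply (fracPowC' (shiftOp A ε) b ζ) p.1) (𝓝[>] 0) (𝓝 p.2)}).toLinearPMap

/-- The Mittag-Leffler function `E_a(z) = Σ zⁿ/Γ(an+1)`. -/
def mlE (a : ℝ) (z : ℂ) : ℂ := ∑' n : ℕ, z ^ n / Complex.Gamma ((a * n + 1 : ℝ) : ℂ)


/-- The stable density `p_α(t,s)` (Yosida's formula), written with contour parameter `θ`. -/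
def pKer (α θ t s : ℝ) : ℝ :=
  (1 / π) * ∫ ρ in Ioi (0:ℝ),
    Real.exp (s * ρ * Real.cos θ - t * ρ ^ α * Real.cos (α * θ)) *
    Real.sin (s * ρ * Real.sin θ - t * ρ ^ α * Real.sin (α * θ) + θ)

/-- The Wright-type function `Φ_γ(z) = Σ (-z)ⁿ/(n! Γ(-γn+1-γ))`. -/
def wrightPhi (γ z : ℝ) : ℝ :=
  ∑' n : ℕ, (-z) ^ n / ((n.factorial : ℝ) * Real.Gamma (-γ * n + 1 - γ))

/-- `φ_γ(t,s) = t^{-γ} Φ_γ(s t^{-γ})`. -/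
def phiK (γ t s : ℝ) : ℝ := t ^ (-γ) * wrightPhi γ (s * t ^ (-γ))

/-- The interval `[0, τ)` for `τ ∈ (0, ∞]`. -/
def Jset (τ : ℝ≥0∞) : Set ℝ := {t : ℝ | 0 ≤ t ∧ ENNReal.ofReal t < τ}

/-- Convolution of a scalar kernel with a vector-valued function: `(k * u)(t)`. -/
def convK (k : ℝ → ℝ) (u : ℝ → X) (t : ℝ) : X := ∫ s in (0:ℝ)..t, k (t - s) • u s

/-- Convolution of an operator family with a vector-valued function: `(S * f)(t)`. -/
def convSf (S : ℝ → X →L[ℂ] X) (f : ℝ → X) (t : ℝ) : X := ∫ s in (0:ℝ)..t, (S (t - s)) (f s)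

/-- `(g_β * u)(t)`, with the convention that `g_0 = δ`, so `g_0 * u = u`. -/
def convK0 (β : ℝ) (u : ℝ → X) (t : ℝ) : X := if β = 0 then u t else convK (gk β) u t

theorem gk_of_nonneg {β t : ℝ} (ht : 0 ≤ t) : gk β t = t ^ (β - 1) / Real.Gamma β := if_pos ht

theorem gk_of_neg {β t : ℝ} (ht : t < 0) : gk β t = 0 := if_neg (not_le.2 ht)

theorem gk_nonneg {β t : ℝ} (hβ : 0 < β) : 0 ≤ gk β t := by
  unfold gk; split
  · exact div_nonneg (Real.rpow_nonneg ‹0 ≤ t› _) (Real.Gamma_pos_of_pos hβ).le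
  · exact le_rfl

theorem gk_one_of_nonneg {t : ℝ} (ht : 0 ≤ t) : gk 1 t = 1 := by
  rw [gk_of_nonneg ht]; simp [Real.Gamma_one]

theorem measurable_gk (β : ℝ) : Measurable (gk β) := by
  unfold gk
  exact Measurable.ite measurableSet_Ici ((measurable_id.pow_const _).div_const _) measurable_const

theorem gk_zero_of_ne {β : ℝ} (hβ : β ≠ 1) : gk β 0 = 0 := by
  rw [gk_of_nonneg le_rfl, Real.zero_rpow (sub_ne_zero.2 hβ), zero_div]

/-- monotonicity for exponent ≥ 1 -/
theorem gk_mono {β s r : ℝ} (hβ : 1 ≤ β) (hs : 0 ≤ s) (hsr : s ≤ r) : gk β s ≤ gk β r := by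
  rw [gk_of_nonneg hs, gk_of_nonneg (hs.trans hsr)]
  have h := Real.Gamma_pos_of_pos (lt_of_lt_of_le one_pos hβ)
  gcongr <;> first | linarith | exact hsr

/-- interval integrability of `gk β` itself on `[0,r]`. -/
theorem intervalIntegrable_gk {β : ℝ} (hβ : 0 < β) (r : ℝ) :
    IntervalIntegrable (gk β) volume 0 r := by
  rcases le_or_gt r 0 with hr | hr
  · -- on [r,0], gk β = 0 a.e.? On uIoc 0 r = Ioc r 0, gk β s = 0 for s < 0; at s = 0 measure zero
    have : IntervalIntegrable (fun _ : ℝ => (0:ℝ)) volume 0 r := intervalIntegrable_const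
    apply this.congr_ae
    have h0 : ∀ᵐ (s : ℝ), s ≠ (0:ℝ) := by
      refine ae_iff.mpr ?_
      simpa using (measure_singleton (0:ℝ))
    filter_upwards [ae_restrict_mem measurableSet_uIoc, ae_restrict_of_ae h0] with s hs hs0
    rw [uIoc_of_ge hr, mem_Ioc] at hs
    exact (gk_of_neg (lt_of_le_of_ne hs.2 hs0)).symm
  · have h1 : IntervalIntegrable (fun s : ℝ => s ^ (β - 1)) volume 0 r :=
      intervalIntegral.intervalIntegrable_rpow' (by linarith)
    have h2 := h1.div_const (Real.Gamma β)
    apply h2.congr_ae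
    filter_upwards [ae_restrict_mem measurableSet_uIoc] with s hs
    rw [uIoc_of_le hr.le, mem_Ioc] at hs
    rw [gk_of_nonneg hs.1.le]

/-- interval integrability of `s ↦ gk β (r - s)` on `[0,r]`. -/
theorem intervalIntegrable_gk_sub {β : ℝ} (hβ : 0 < β) (r : ℝ) :
    IntervalIntegrable (fun s => gk β (r - s)) volume 0 r := by
  have := (intervalIntegrable_gk hβ r).comp_sub_left r
  exact (by simpa using this : IntervalIntegrable _ volume r 0).symm

/-- Beta identity: `(gk β * gk γ) = gk (β+γ)` pointwise at `c > 0`. -/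
theorem gk_conv {β γ : ℝ} (hβ : 0 < β) (hγ : 0 < γ) {c : ℝ} (hc : 0 < c) :
    (∫ s in (0:ℝ)..c, gk β (c - s) * gk γ s) = gk (β + γ) c := by
  have hΓβ := Real.Gamma_pos_of_pos hβ
  have hΓγ := Real.Gamma_pos_of_pos hγ
  have hΓβγ := Real.Gamma_pos_of_pos (add_pos hγ hβ)
  have h1 : (∫ s in (0:ℝ)..c, gk β (c - s) * gk γ s)
      = (∫ s in (0:ℝ)..c, s ^ (γ-1) * (c - s) ^ (β-1)) / (Real.Gamma β * Real.Gamma γ) := by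
    rw [← intervalIntegral.integral_div]
    apply intervalIntegral.integral_congr
    intro s hs
    rw [uIcc_of_le hc.le] at hs
    show gk β (c - s) * gk γ s = s ^ (γ-1) * (c - s) ^ (β-1) / (Real.Gamma β * Real.Gamma γ)
    rw [gk_of_nonneg (by linarith [hs.2] : (0:ℝ) ≤ c - s), gk_of_nonneg hs.1]
    field_simp
  have hGne : Complex.Gamma ((γ:ℂ) + (β:ℂ)) ≠ 0 := by
    rw [show (γ:ℂ) + (β:ℂ) = ((γ + β : ℝ) : ℂ) by push_cast; ring, Complex.Gamma_ofReal]
    exact_mod_cast hΓβγ.ne'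
  have hB : Complex.betaIntegral (γ:ℂ) (β:ℂ)
      = Complex.Gamma γ * Complex.Gamma β / Complex.Gamma ((γ:ℂ) + β) := by
    rw [eq_div_iff hGne, mul_comm, ← Complex.Gamma_mul_Gamma_eq_betaIntegral] <;> simpa
  have hC := Complex.betaIntegral_scaled (γ:ℂ) (β:ℂ) hc
  rw [hB] at hC
  have h3 : (∫ x in (0:ℝ)..c, (x:ℂ) ^ ((γ:ℂ) - 1) * ((c:ℂ) - x) ^ ((β:ℂ) - 1))
      = ((∫ s in (0:ℝ)..c, s ^ (γ-1) * (c - s) ^ (β-1) : ℝ) : ℂ) := by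
    rw [show ((∫ s in (0:ℝ)..c, s ^ (γ-1) * (c - s) ^ (β-1) : ℝ) : ℂ)
        = ∫ s in (0:ℝ)..c, ((s ^ (γ-1) * (c - s) ^ (β-1) : ℝ) : ℂ) from
        (RCLike.intervalIntegral_ofReal (𝕜 := ℂ)).symm]
    apply intervalIntegral.integral_congr
    intro s hs
    rw [uIcc_of_le hc.le] at hs
    show (s:ℂ) ^ ((γ:ℂ) - 1) * ((c:ℂ) - s) ^ ((β:ℂ) - 1)
        = ((s ^ (γ - 1) * (c - s) ^ (β - 1) : ℝ) : ℂ)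
    rw [Complex.ofReal_mul, Complex.ofReal_cpow hs.1,
      Complex.ofReal_cpow (by linarith [hs.2] : (0:ℝ) ≤ c - s)]
    push_cast
    ring
  rw [h3] at hC
  have h4 : ((c:ℂ)) ^ ((γ:ℂ) + (β:ℂ) - 1) = ((c ^ (γ + β - 1) : ℝ) : ℂ) := by
    rw [Complex.ofReal_cpow hc.le]
    push_cast
    ring
  rw [h4, Complex.Gamma_ofReal, Complex.Gamma_ofReal,
    show (γ:ℂ) + (β:ℂ) = ((γ + β : ℝ):ℂ) by push_cast; ring, Complex.Gamma_ofReal] at hC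
  have h5 : (∫ s in (0:ℝ)..c, s ^ (γ-1) * (c - s) ^ (β-1))
      = c ^ (γ + β - 1) * (Real.Gamma γ * Real.Gamma β / Real.Gamma (γ + β)) := by
    exact_mod_cast hC
  rw [h1, h5, gk_of_nonneg hc.le, show β + γ - 1 = γ + β - 1 by ring,
    show β + γ = γ + β by ring]
  field_simp

variable {E : Type*} [NormedAddCommGroup E] [NormedSpace ℝ E] [CompleteSpace E]

theorem gk_integral {β : ℝ} (hβ : 0 < β) {r : ℝ} (hr : 0 ≤ r) :
    (∫ s in (0:ℝ)..r, gk β (r - s)) = gk (β + 1) r := by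
  rcases eq_or_lt_of_le hr with h | h
  · rw [← h]
    simp [gk_zero_of_ne (by linarith : β + 1 ≠ 1)]
  · rw [← gk_conv hβ one_pos h]
    apply intervalIntegral.integral_congr
    intro s hs
    rw [uIcc_of_le hr] at hs
    show gk β (r - s) = gk β (r - s) * gk 1 s
    rw [gk_one_of_nonneg hs.1, mul_one]

theorem intervalIntegrable_gk_smul {β : ℝ} (hβ : 0 < β) {r : ℝ} (hr : 0 ≤ r) {v : ℝ → E}
    (hv : Continuous v) :
    IntervalIntegrable (fun s => gk β (r - s) • v s) volume 0 r := by
  obtain ⟨C, hC⟩ := (isCompact_Icc (a := (0:ℝ)) (b := r)).exists_bound_of_continuousOn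
    hv.continuousOn
  apply IntervalIntegrable.mono_fun' (g := fun s => gk β (r - s) * C)
    ((intervalIntegrable_gk_sub hβ r).mul_const C)
  · exact (((measurable_gk β).comp (measurable_const.sub measurable_id)).aestronglyMeasurable.smul
      hv.aestronglyMeasurable)
  · filter_upwards [ae_restrict_mem measurableSet_uIoc] with s hs
    rw [uIoc_of_le hr] at hs
    rw [norm_smul, Real.norm_eq_abs, abs_of_nonneg (gk_nonneg hβ)]
    exact mul_le_mul_of_nonneg_left (hC s ⟨hs.1.le, hs.2⟩) (gk_nonneg hβ)

theorem norm_convK_le {γ : ℝ} (hγ : 0 < γ) {t : ℝ} (ht : 0 ≤ t) {v : ℝ → E}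
    (hv : Continuous v) {C : ℝ} (hC : ∀ s ∈ Icc (0:ℝ) t, ‖v s‖ ≤ C) :
    ‖∫ s in (0:ℝ)..t, gk γ (t - s) • v s‖ ≤ C * gk (γ + 1) t := by
  refine le_trans (intervalIntegral.norm_integral_le_of_norm_le
    (g := fun s => gk γ (t - s) * C) (μ := volume) ht ?_ ?_) ?_
  rotate_left 2
  · have hC0 : 0 ≤ C := le_trans (norm_nonneg _) (hC 0 ⟨le_rfl, ht⟩)
    have : (∫ s in (0:ℝ)..t, gk γ (t - s) * C) = C * gk (γ + 1) t := by
      rw [intervalIntegral.integral_mul_const, gk_integral hγ ht, mul_comm]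
    rw [this]
  · filter_upwards with s hs
    rw [norm_smul, Real.norm_eq_abs, abs_of_nonneg (gk_nonneg hγ)]
    exact mul_le_mul_of_nonneg_left (hC s ⟨hs.1.le, hs.2⟩) (gk_nonneg hγ)
  · exact (intervalIntegrable_gk_sub hγ t).mul_const C

theorem gk_smul_const_integral {β : ℝ} (hβ : 0 < β) {r : ℝ} (hr : 0 ≤ r) (c : E) :
    (∫ s in (0:ℝ)..r, gk β (r - s) • c) = gk (β + 1) r • c := by
  rw [intervalIntegral.integral_smul_const, gk_integral hβ hr]

theorem integrableOn_gk_smul_Ioc {γ : ℝ} (hγ : 0 < γ) {s r : ℝ} (h0 : 0 ≤ s) (hsr : s ≤ r)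
    {w : ℝ → E} (hw : Continuous w) :
    IntegrableOn (fun σ => gk γ (s - σ) • w σ) (Ioc 0 r) volume := by
  rw [← Ioc_union_Ioc_eq_Ioc h0 hsr]
  apply IntegrableOn.union
  · exact (intervalIntegrable_gk_smul hγ h0 hw).1
  · apply (integrableOn_zero (s := Ioc s r)).congr_fun ?_ measurableSet_Ioc
    intro σ hσ
    show (0:E) = gk γ (s - σ) • w σ
    rw [gk_of_neg (by linarith [hσ.1] : s - σ < 0), zero_smul]

theorem setIntegral_gk_smul_Ioc {γ : ℝ} (hγ : 0 < γ) {s r : ℝ} (h0 : 0 ≤ s) (hsr : s ≤ r)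
    {w : ℝ → E} (hw : Continuous w) :
    (∫ σ in Ioc (0:ℝ) r, gk γ (s - σ) • w σ) = ∫ σ in (0:ℝ)..s, gk γ (s - σ) • w σ := by
  rw [← Ioc_union_Ioc_eq_Ioc h0 hsr, setIntegral_union (Ioc_disjoint_Ioc_of_le le_rfl) measurableSet_Ioc
    (intervalIntegrable_gk_smul hγ h0 hw).1
    (((integrableOn_zero (s := Ioc s r)).congr_fun (fun σ hσ =>
      show (0:E) = gk γ (s - σ) • w σ by
        rw [gk_of_neg (by linarith [hσ.1] : s - σ < 0), zero_smul]) measurableSet_Ioc))]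
  rw [intervalIntegral.integral_of_le h0]
  have : (∫ σ in Ioc s r, gk γ (s - σ) • w σ) = 0 := by
    rw [setIntegral_congr_fun measurableSet_Ioc (g := fun _ => (0:E)) (fun σ hσ =>
      show gk γ (s - σ) • w σ = (0:E) by
        rw [gk_of_neg (by linarith [hσ.1] : s - σ < 0), zero_smul]), integral_zero]
  rw [this, add_zero]

theorem gk_continuousAt {β t : ℝ} (ht : 0 < t) : ContinuousAt (gk β) t := by
  apply ContinuousAt.congr (f := fun t => t ^ (β - 1) / Real.Gamma β)
  · exact (Real.continuousAt_rpow_const t (β - 1) (Or.inl ht.ne')).div_const _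
  · filter_upwards [Ioi_mem_nhds ht] with s hs
    exact (gk_of_nonneg (le_of_lt hs)).symm

theorem intervalIntegrable_gk_mul {β γ : ℝ} (hβ : 0 < β) (hγ : 0 < γ) {c : ℝ} (hc : 0 ≤ c) :
    IntervalIntegrable (fun τ => gk β (c - τ) * gk γ τ) volume 0 c := by
  rcases eq_or_lt_of_le hc with h | hc
  · rw [← h]
  have h1 : IntervalIntegrable (fun τ => gk β (c - τ) * gk γ τ) volume 0 (c/2) := by
    apply IntervalIntegrable.continuousOn_mul
    · exact (intervalIntegrable_gk hγ c).mono_set'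
        (by rw [uIoc_of_le (by linarith), uIoc_of_le hc.le]; exact Ioc_subset_Ioc_right (by linarith))
    · intro τ hτ
      rw [uIcc_of_le (by linarith)] at hτ
      exact ((gk_continuousAt (by linarith [hτ.2] : 0 < c - τ)).comp
        ((continuous_const.sub continuous_id).continuousAt)).continuousWithinAt
  have h2 : IntervalIntegrable (fun τ => gk β (c - τ) * gk γ τ) volume (c/2) c := by
    apply IntervalIntegrable.mul_continuousOn
    · exact (intervalIntegrable_gk_sub hβ c).mono_set'
        (by rw [uIoc_of_le (by linarith), uIoc_of_le hc.le]; exact Ioc_subset_Ioc_left (by linarith))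
    · intro τ hτ
      rw [uIcc_of_le (by linarith)] at hτ
      exact (gk_continuousAt (by linarith [hτ.1] : (0:ℝ) < τ)).continuousWithinAt
  exact h1.trans h2


theorem gk_conv_assoc {β γ : ℝ} (hβ : 0 < β) (hγ : 0 < γ) {r : ℝ} (hr : 0 ≤ r)
    {v : ℝ → E} (hv : Continuous v) :
    (∫ s in (0:ℝ)..r, gk β (r - s) • (∫ σ in (0:ℝ)..s, gk γ (s - σ) • v σ))
      = ∫ σ in (0:ℝ)..r, gk (β + γ) (r - σ) • v σ := by
  rcases eq_or_lt_of_le hr with h | hr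
  · rw [← h]; simp
  obtain ⟨C, hC⟩ := (isCompact_Icc (a := (0:ℝ)) (b := r)).exists_bound_of_continuousOn
    hv.continuousOn
  have hC0 : 0 ≤ C := le_trans (norm_nonneg _) (hC 0 ⟨le_rfl, hr.le⟩)
  set μ : Measure ℝ := volume.restrict (Ioc (0:ℝ) r) with hμ
  set H : ℝ × ℝ → E := fun p => (gk β (r - p.1) * gk γ (p.1 - p.2)) • v p.2 with hH
  have hSM : StronglyMeasurable H := by
    apply StronglyMeasurable.smul
    · exact (((measurable_gk β).comp (measurable_const.sub measurable_fst)).mul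
        ((measurable_gk γ).comp (measurable_fst.sub measurable_snd))).stronglyMeasurable
    · exact (hv.comp continuous_snd).stronglyMeasurable
  -- integrability of each slice
  have hslice : ∀ s ∈ Ioc (0:ℝ) r, Integrable (fun σ => H (s, σ)) μ := by
    intro s hs
    have h1 : (fun σ => H (s, σ)) = fun σ => gk β (r - s) • (gk γ (s - σ) • v σ) := by
      funext σ; rw [hH]; simp [smul_smul]
    rw [h1]
    exact ((integrableOn_gk_smul_Ioc hγ hs.1.le hs.2 hv).smul (gk β (r - s)))
  -- bound on the norm-integral of slices
  have hbnd : ∀ s ∈ Ioc (0:ℝ) r,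
      (∫ σ, ‖H (s, σ)‖ ∂μ) ≤ gk β (r - s) * (C * gk (γ + 1) r) := by
    intro s hs
    have h1 : ∀ σ, ‖H (s, σ)‖ = gk β (r - s) * (gk γ (s - σ) • ‖v σ‖) := by
      intro σ
      rw [hH]; simp only [norm_smul, Real.norm_eq_abs, smul_eq_mul]
      rw [abs_mul, abs_of_nonneg (gk_nonneg hβ), abs_of_nonneg (gk_nonneg hγ), mul_assoc]
    calc (∫ σ, ‖H (s, σ)‖ ∂μ) = gk β (r - s) * ∫ σ, gk γ (s - σ) • ‖v σ‖ ∂μ := by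
          simp_rw [h1]; rw [integral_const_mul]
      _ ≤ gk β (r - s) * (C * gk (γ + 1) r) := by
          apply mul_le_mul_of_nonneg_left _ (gk_nonneg hβ)
          rw [hμ, setIntegral_gk_smul_Ioc hγ hs.1.le hs.2 (hv.norm)]
          calc (∫ σ in (0:ℝ)..s, gk γ (s - σ) • ‖v σ‖)
              ≤ ‖∫ σ in (0:ℝ)..s, gk γ (s - σ) • ‖v σ‖‖ := le_abs_self _
            _ ≤ C * gk (γ + 1) s := norm_convK_le hγ hs.1.le hv.norm
                (fun σ hσ => by
                  rw [Real.norm_eq_abs, abs_of_nonneg (norm_nonneg _)]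
                  exact hC σ ⟨hσ.1, hσ.2.trans hs.2⟩)
            _ ≤ C * gk (γ + 1) r := by
                apply mul_le_mul_of_nonneg_left _ hC0
                exact gk_mono (by linarith) (sub_nonneg.1 (by linarith [hs.1])) hs.2
  -- product integrability
  have hint : Integrable H (μ.prod μ) := by
    rw [integrable_prod_iff hSM.aestronglyMeasurable]
    constructor
    · filter_upwards [ae_restrict_mem measurableSet_Ioc] with s hs
      exact hslice s hs
    · apply Integrable.mono' (g := fun s => gk β (r - s) * (C * gk (γ + 1) r))
      · exact ((intervalIntegrable_gk_sub hβ r).mul_const _).1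
      · exact (hSM.norm.aestronglyMeasurable.integral_prod_right')
      · filter_upwards [ae_restrict_mem measurableSet_Ioc] with s hs
        rw [Real.norm_eq_abs, abs_of_nonneg (integral_nonneg (fun σ => norm_nonneg _))]
        exact hbnd s hs
  -- step 1: left side as iterated integral
  have hstep1 : (∫ s in (0:ℝ)..r, gk β (r - s) • (∫ σ in (0:ℝ)..s, gk γ (s - σ) • v σ))
      = ∫ s, (∫ σ, H (s, σ) ∂μ) ∂μ := by
    rw [intervalIntegral.integral_of_le hr.le]
    apply setIntegral_congr_fun measurableSet_Ioc
    intro s hs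
    show gk β (r - s) • (∫ σ in (0:ℝ)..s, gk γ (s - σ) • v σ) = ∫ σ, H (s, σ) ∂μ
    rw [← setIntegral_gk_smul_Ioc hγ hs.1.le hs.2 hv, hμ, ← integral_smul]
    apply integral_congr_ae
    filter_upwards with σ
    rw [hH, smul_smul]
  -- step 2: swap
  have hswap := integral_integral_swap (f := fun s σ => H (s, σ)) (μ := μ) (ν := μ) hint
  -- step 3: inner integral computation, a.e. in σ
  have hne : ∀ᵐ σ : ℝ, σ ≠ r := by
    refine ae_iff.mpr ?_
    simpa using (measure_singleton (r:ℝ))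
  have hstep3 : (∫ σ, (∫ s, H (s, σ) ∂μ) ∂μ) = ∫ σ in (0:ℝ)..r, gk (β + γ) (r - σ) • v σ := by
    rw [intervalIntegral.integral_of_le hr.le, hμ]
    apply integral_congr_ae
    filter_upwards [ae_restrict_mem measurableSet_Ioc, ae_restrict_of_ae hne] with σ hσ hσr
    have hσr' : σ < r := lt_of_le_of_ne hσ.2 hσr
    have hins : ∀ s, H (s, σ) = (gk β (r - s) * gk γ (s - σ)) • v σ := fun s => rfl
    rw [show (∫ s, H (s, σ) ∂μ) = (∫ s, gk β (r - s) * gk γ (s - σ) ∂μ) • v σ by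
      simp_rw [hins]; rw [integral_smul_const]]
    congr 1
    -- scalar integral over Ioc 0 r splits
    have hzero : ∀ᵐ s ∂(volume.restrict (Ioc (0:ℝ) σ)),
        gk β (r - s) * gk γ (s - σ) = 0 := by
      have hne2 : ∀ᵐ s : ℝ, s ≠ σ := by
        refine ae_iff.mpr ?_
        simpa using (measure_singleton (σ:ℝ))
      filter_upwards [ae_restrict_mem measurableSet_Ioc, ae_restrict_of_ae hne2] with s hs hs2
      rw [gk_of_neg (lt_of_le_of_ne (by linarith [hs.2]) (sub_ne_zero.2 hs2)), mul_zero]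
    have hIσr : IntegrableOn (fun s => gk β (r - s) * gk γ (s - σ)) (Ioc σ r) volume := by
      have := (intervalIntegrable_gk_mul hβ hγ (c := r - σ) (by linarith)).comp_add_right (-σ)
      simp only [zero_sub, neg_neg, sub_neg_eq_add] at this
      have h3 : IntervalIntegrable (fun x => gk β (r - σ - (x + -σ)) * gk γ (x + -σ))
          volume σ r := by
        have e1 : (0:ℝ) + σ = σ := by ring
        have e2 : r - σ + σ = r := by ring
        rwa [e1, e2] at this
      have h4 : (fun x => gk β (r - σ - (x + -σ)) * gk γ (x + -σ))
          = fun s => gk β (r - s) * gk γ (s - σ) := by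
        funext s
        rw [show r - σ - (s + -σ) = r - s by ring, show s + -σ = s - σ by ring]
      rw [h4] at h3
      exact h3.1
    rw [hμ, ← Ioc_union_Ioc_eq_Ioc hσ.1.le hσr'.le,
      setIntegral_union (Ioc_disjoint_Ioc_of_le le_rfl) measurableSet_Ioc
        ((integrable_zero _ _ _).congr (hzero.mono fun s h => h.symm)) hIσr,
      integral_congr_ae hzero, integral_zero, zero_add,
      ← intervalIntegral.integral_of_le hσr'.le]
    have hcv : (∫ s in σ..r, gk β (r - s) * gk γ (s - σ))
        = ∫ τ in (0:ℝ)..(r - σ), gk β ((r - σ) - τ) * gk γ τ := by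
      have hcv0 := intervalIntegral.integral_comp_sub_right (a := σ) (b := r)
        (fun τ => gk β ((r - σ) - τ) * gk γ τ) σ
      rw [sub_self] at hcv0
      rw [← hcv0]
      apply intervalIntegral.integral_congr
      intro s hs
      show gk β (r - s) * gk γ (s - σ) = gk β (r - σ - (s - σ)) * gk γ (s - σ)
      rw [show r - σ - (s - σ) = r - s by ring]
    rw [hcv, gk_conv hβ hγ (by linarith : (0:ℝ) < r - σ)]
  exact hstep1.trans ((by exact hswap :
    (∫ s, (∫ σ, H (s, σ) ∂μ) ∂μ) = ∫ σ, (∫ s, H (s, σ) ∂μ) ∂μ).trans hstep3)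


/-- representation of the convolution as a full-line integral of an indicator. -/
theorem convK_eq_indicator {γ : ℝ} {v : ℝ → E} (hv : Continuous v) {t : ℝ} (ht : 0 ≤ t) :
    (∫ s in (0:ℝ)..t, gk γ (t - s) • v s)
      = ∫ σ, (Ioc (0:ℝ) t).indicator (fun σ => gk γ σ • v (t - σ)) σ := by
  have h1 : (∫ s in (0:ℝ)..t, gk γ (t - s) • v s)
      = ∫ σ in (0:ℝ)..t, gk γ σ • v (t - σ) := by
    have h0 := intervalIntegral.integral_comp_sub_left (a := (0:ℝ)) (b := t)
      (fun σ => gk γ σ • v (t - σ)) t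
    rw [sub_self, sub_zero] at h0
    rw [← h0]
    apply intervalIntegral.integral_congr
    intro s _
    show gk γ (t - s) • v s = gk γ (t - s) • v (t - (t - s))
    rw [show t - (t - s) = s by ring]
  rw [h1, intervalIntegral.integral_of_le ht, ← integral_indicator measurableSet_Ioc]

theorem continuousAt_convK {γ : ℝ} (hγ : 0 < γ) {v : ℝ → E} (hv : Continuous v) {t₀ : ℝ}
    (ht₀ : 0 < t₀) :
    ContinuousAt (fun t => ∫ s in (0:ℝ)..t, gk γ (t - s) • v s) t₀ := by
  obtain ⟨C, hC⟩ := (isCompact_Icc (a := (0:ℝ)) (b := t₀ + 1)).exists_bound_of_continuousOn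
    hv.continuousOn
  have hC0 : 0 ≤ C := le_trans (norm_nonneg _) (hC 0 ⟨le_rfl, by linarith⟩)
  set F : ℝ → ℝ → E := fun t σ => (Ioc (0:ℝ) t).indicator (fun σ => gk γ σ • v (t - σ)) σ
    with hF
  have key : Tendsto (fun t => ∫ σ, F t σ) (𝓝 t₀) (𝓝 (∫ σ, F t₀ σ)) := by
    apply tendsto_integral_filter_of_dominated_convergence
      (bound := (Ioc (0:ℝ) (t₀ + 1)).indicator (fun σ => gk γ σ * C))
    · filter_upwards with t
      exact (((measurable_gk γ).aestronglyMeasurable).smul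
        ((hv.comp (continuous_const.sub continuous_id)).aestronglyMeasurable)).indicator
        measurableSet_Ioc
    · filter_upwards [Ioo_mem_nhds (by linarith : t₀/2 < t₀) (by linarith : t₀ < t₀ + 1)]
        with t htI
      filter_upwards with σ
      by_cases hσ : σ ∈ Ioc (0:ℝ) t
      · rw [hF]
        simp only [indicator_of_mem hσ]
        have hσ' : σ ∈ Ioc (0:ℝ) (t₀ + 1) := ⟨hσ.1, hσ.2.trans (le_of_lt htI.2)⟩
        rw [indicator_of_mem hσ', norm_smul, Real.norm_eq_abs, abs_of_nonneg (gk_nonneg hγ)]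
        exact mul_le_mul_of_nonneg_left
          (hC _ ⟨by linarith [hσ.2], by linarith [hσ.1, htI.2]⟩) (gk_nonneg hγ)
      · rw [hF]
        simp only [indicator_of_notMem hσ, norm_zero]
        apply indicator_nonneg
        intro σ' _
        exact mul_nonneg (gk_nonneg hγ) hC0
    · exact ((intervalIntegrable_gk hγ (t₀+1)).mul_const C).1.integrable_indicator
        measurableSet_Ioc
    · have hne : ∀ᵐ σ : ℝ, σ ≠ t₀ := by
        refine ae_iff.mpr ?_
        simpa using (measure_singleton t₀)
      filter_upwards [hne] with σ hσ
      rcases le_or_gt σ 0 with h0 | h0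
      · have : ∀ t, F t σ = 0 := fun t => indicator_of_notMem (fun h => absurd h.1 (not_lt.2 h0)) _
        simp only [this]
        exact tendsto_const_nhds
      rcases lt_or_gt_of_ne hσ with hlt | hgt
      · -- 0 < σ < t₀ : eventually σ ≤ t
        have hev : (fun t => F t σ) =ᶠ[𝓝 t₀] fun t => gk γ σ • v (t - σ) := by
          filter_upwards [Ioi_mem_nhds hlt] with t ht
          exact indicator_of_mem (show σ ∈ Ioc (0:ℝ) t from ⟨h0, le_of_lt ht⟩) _
        have hlim : Tendsto (fun t => gk γ σ • v (t - σ)) (𝓝 t₀) (𝓝 (gk γ σ • v (t₀ - σ))) :=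
          ((hv.tendsto _).comp (tendsto_id.sub tendsto_const_nhds)).const_smul _
        rw [show F t₀ σ = gk γ σ • v (t₀ - σ) from
          indicator_of_mem (show σ ∈ Ioc (0:ℝ) t₀ from ⟨h0, le_of_lt hlt⟩) _]
        exact hlim.congr' hev.symm
      · -- σ > t₀ : eventually t < σ
        have hev : (fun t => F t σ) =ᶠ[𝓝 t₀] fun _ => (0:E) := by
          filter_upwards [Iio_mem_nhds hgt] with t ht
          exact indicator_of_notMem
            (show σ ∉ Ioc (0:ℝ) t from fun h => absurd h.2 (not_le.2 ht)) _
        rw [show F t₀ σ = 0 from indicator_of_notMem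
          (show σ ∉ Ioc (0:ℝ) t₀ from fun h => absurd h.2 (not_le.2 hgt)) _]
        exact tendsto_const_nhds.congr' hev.symm
  have heq : (fun t => ∫ σ, F t σ) =ᶠ[𝓝 t₀] fun t => ∫ s in (0:ℝ)..t, gk γ (t - s) • v s := by
    filter_upwards [Ioi_mem_nhds ht₀] with t ht
    exact (convK_eq_indicator hv (le_of_lt ht)).symm
  have := key.congr' heq
  rw [ContinuousAt, show (∫ s in (0:ℝ)..t₀, gk γ (t₀ - s) • v s)
    = ∫ σ, F t₀ σ from convK_eq_indicator hv ht₀.le]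
  exact this

/-- generalization with measurability+bound instead of continuity -/
theorem intervalIntegrable_gk_smul' {β : ℝ} (hβ : 0 < β) {r : ℝ} (hr : 0 ≤ r) {v : ℝ → E}
    (hm : AEStronglyMeasurable v (volume.restrict (Ioc (0:ℝ) r)))
    {C : ℝ} (hC : ∀ s ∈ Ioc (0:ℝ) r, ‖v s‖ ≤ C) :
    IntervalIntegrable (fun s => gk β (r - s) • v s) volume 0 r := by
  apply IntervalIntegrable.mono_fun' (g := fun s => gk β (r - s) * C)
    ((intervalIntegrable_gk_sub hβ r).mul_const C)
  · apply AEStronglyMeasurable.smul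
    · exact ((measurable_gk β).comp (measurable_const.sub measurable_id)).aestronglyMeasurable
    · rwa [uIoc_of_le hr]
  · filter_upwards [ae_restrict_mem measurableSet_uIoc] with s hs
    rw [uIoc_of_le hr] at hs
    rw [norm_smul, Real.norm_eq_abs, abs_of_nonneg (gk_nonneg hβ)]
    exact mul_le_mul_of_nonneg_left (hC s hs) (gk_nonneg hβ)

theorem hasDerivAt_gk_smul {c : ℝ} (hc : 0 < c) {t : ℝ} (ht : 0 < t) (y : E) :
    HasDerivAt (fun r => gk (c + 1) r • y) (gk c t • y) t := by
  have h1 : HasDerivAt (fun r : ℝ => r ^ c / Real.Gamma (c + 1)) (gk c t) t := by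
    have h2 := Real.hasDerivAt_rpow_const (x := t) (p := c) (Or.inl ht.ne')
    have h3 := h2.div_const (Real.Gamma (c + 1))
    convert h3 using 1
    all_goals try with_reducible_and_instances rfl
    rw [gk_of_nonneg ht.le, Real.Gamma_add_one (ne_of_gt hc)]
    have hΓ := Real.Gamma_pos_of_pos hc
    field_simp
  have h4 := h1.smul_const y
  apply h4.congr_of_eventuallyEq
  filter_upwards [Ioi_mem_nhds ht] with r hr
  rw [gk_of_nonneg (le_of_lt hr), show c + 1 - 1 = c by ring]

theorem hasDerivAt_convK {γ : ℝ} (hγ : 0 < γ) {v : ℝ → E} (hv : Continuous v) {t : ℝ}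
    (ht : 0 < t) :
    HasDerivAt (fun r => ∫ s in (0:ℝ)..r, gk (γ + 1) (r - s) • v s)
      (∫ s in (0:ℝ)..t, gk γ (t - s) • v s) t := by
  set w : ℝ → E := fun s => ∫ σ in (0:ℝ)..s, gk γ (s - σ) • v σ with hw
  have hw_contAt : ∀ s, 0 < s → ContinuousAt w s := fun s hs => continuousAt_convK hγ hv hs
  have hw_contOn : ContinuousOn w (Ioi 0) := fun s hs => (hw_contAt s hs).continuousWithinAt
  obtain ⟨C, hC⟩ := (isCompact_Icc (a := (0:ℝ)) (b := t)).exists_bound_of_continuousOn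
    hv.continuousOn
  have hw_int : IntervalIntegrable w volume 0 t := by
    apply IntervalIntegrable.mono_fun' (g := fun s => C * gk (γ + 1) s)
      ((intervalIntegrable_gk (by linarith) t).const_mul C)
    · rw [uIoc_of_le ht.le]
      exact (hw_contOn.mono (Ioc_subset_Ioi_self)).aestronglyMeasurable measurableSet_Ioc
    · filter_upwards [ae_restrict_mem measurableSet_uIoc] with s hs
      rw [uIoc_of_le ht.le] at hs
      exact norm_convK_le hγ hs.1.le hv (fun σ hσ => hC σ ⟨hσ.1, hσ.2.trans hs.2⟩)
  have hw_meas : StronglyMeasurableAtFilter w (𝓝 t) :=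
    ContinuousOn.stronglyMeasurableAtFilter isOpen_Ioi hw_contOn t ht
  have hftc := intervalIntegral.integral_hasDerivAt_right hw_int hw_meas (hw_contAt t ht)
  apply hftc.congr_of_eventuallyEq
  filter_upwards [Ioi_mem_nhds ht] with r hr
  -- show conv with gk (γ+1) equals primitive of w, for r > 0
  have h1 : (∫ s in (0:ℝ)..r, w s) = ∫ s in (0:ℝ)..r, gk 1 (r - s) • w s := by
    apply intervalIntegral.integral_congr
    intro s hs
    rw [uIcc_of_le hr.le] at hs
    show w s = gk 1 (r - s) • w s
    rw [gk_one_of_nonneg (by linarith [hs.2]), one_smul]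
  have h2 := gk_conv_assoc one_pos hγ hr.le hv
  show (∫ s in (0:ℝ)..r, gk (γ + 1) (r - s) • v s) = ∫ s in (0:ℝ)..r, w s
  rw [h1, hw]
  rw [show γ + 1 = 1 + γ by ring, ← h2]

section MainProof
variable {X : Type*} [NormedAddCommGroup X] [NormedSpace ℂ X] [CompleteSpace X]

theorem statement16' (A : X →ₗ.[ℂ] X) (α : ℝ) (hα : 0 < α) (n : ℕ)
    (hnα : 1 ≤ (n : ℝ) * α)
    (S : ℝ → X →L[ℂ] X) (hS : IsResolventFamily α A S)
    (x : X) (hx : ∀ k < n, (pApply A)^[k] x ∈ A.domain) :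
    ∀ t : ℝ, 0 < t →
      HasDerivAt (fun r => S r x)
        ((∑ k ∈ Finset.Ico 1 n, gk ((k : ℝ) * α) t • (pApply A)^[k] x)
          + convK0 ((n : ℝ) * α - 1) (fun s => S s ((pApply A)^[n] x)) t) t := by
  intro t ht
  have hn : 0 < n := by
    rcases Nat.eq_zero_or_pos n with h | h
    · subst h; norm_num at hnα
    · exact h
  obtain ⟨hScont, hS0, hScomm, hSeq⟩ := hS
  set y : ℕ → X := fun k => (pApply A)^[k] x with hy
  set u : ℕ → ℝ → X := fun k s => S (max s 0) (y k) with hu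
  have hu_cont : ∀ k, Continuous (u k) := by
    intro k
    apply ContinuousOn.comp_continuous (hScont (y k)) (continuous_id.max continuous_const)
    intro s; exact le_max_right s 0
  have hu_eq : ∀ k (s : ℝ), 0 ≤ s → u k s = S s (y k) := by
    intro k s hs
    show S (max s 0) (y k) = S s (y k)
    rw [max_eq_left hs]
  have hy_mem : ∀ k, k < n → y k ∈ A.domain := hx
  have hres : ∀ m, m < n → ∀ s : ℝ, 0 ≤ s →
      S s (y m) = y m + ∫ σ in (0:ℝ)..s, gk α (s - σ) • u (m+1) σ := by
    intro m hm s hs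
    have h1 := hSeq s hs (y m) (hy_mem m hm)
    rw [h1]
    congr 1
    apply intervalIntegral.integral_congr
    intro σ hσ
    rw [uIcc_of_le hs] at hσ
    have h2 : A ⟨y m, hy_mem m hm⟩ = y (m+1) := by
      conv_rhs => rw [hy]
      simp only [Function.iterate_succ_apply']
      rw [pApply, dif_pos (hx m hm)]
    show gk α (s - σ) • S σ (A ⟨y m, hy_mem m hm⟩) = gk α (s - σ) • u (m+1) σ
    rw [h2, hu_eq (m+1) σ hσ.1]
  -- main identity by induction
  have hid : ∀ m, 1 ≤ m → m ≤ n → ∀ r : ℝ, 0 ≤ r →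
      S r x = (∑ k ∈ Finset.range m, gk ((k:ℝ) * α + 1) r • y k)
        + ∫ s in (0:ℝ)..r, gk ((m:ℝ) * α) (r - s) • u m s := by
    intro m
    induction m with
    | zero => intro h; exact absurd h (by norm_num)
    | succ m ih =>
      intro _ hmn r hr
      rcases Nat.eq_zero_or_pos m with hm0 | hm0
      · subst hm0
        simp only [zero_add, Finset.range_one, Finset.sum_singleton]
        rw [show ((0:ℕ):ℝ) * α + 1 = 1 by push_cast; ring, gk_one_of_nonneg hr, one_smul]
        have h1 := hres 0 hn r hr
        have hy0 : y 0 = x := rfl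
        rw [hy0] at h1
        rw [show (((0:ℕ)+1:ℕ):ℝ) * α = α by push_cast; ring]
        exact h1
      · have hmn' : m ≤ n := by omega
        have hmαpos : 0 < (m:ℝ) * α :=
          mul_pos (by exact_mod_cast hm0) hα
        set W : ℝ → X := fun s => ∫ σ in (0:ℝ)..s, gk α (s - σ) • u (m+1) σ with hW
        have hWcontAt : ∀ s : ℝ, 0 < s → ContinuousAt W s :=
          fun s hs => continuousAt_convK hα (hu_cont (m+1)) hs
        obtain ⟨C, hC⟩ := (isCompact_Icc (a := (0:ℝ)) (b := r)).exists_bound_of_continuousOn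
          (hu_cont (m+1)).continuousOn
        have hC0 : 0 ≤ C := le_trans (norm_nonneg _) (hC 0 ⟨le_rfl, hr⟩)
        have hI1 : IntervalIntegrable (fun s => gk ((m:ℝ)*α) (r - s) • y m) volume 0 r :=
          intervalIntegrable_gk_smul hmαpos hr continuous_const
        have hI2 : IntervalIntegrable (fun s => gk ((m:ℝ)*α) (r - s) • W s) volume 0 r := by
          apply intervalIntegrable_gk_smul' hmαpos hr
            (C := C * gk (α+1) r)
          · exact (show ContinuousOn W (Ioc 0 r) from
              fun s hs => (hWcontAt s hs.1).continuousWithinAt).aestronglyMeasurable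
              measurableSet_Ioc
          · intro s hs
            calc ‖W s‖ ≤ C * gk (α+1) s := norm_convK_le hα hs.1.le (hu_cont (m+1))
                  (fun σ hσ => hC σ ⟨hσ.1, hσ.2.trans hs.2⟩)
              _ ≤ C * gk (α+1) r :=
                  mul_le_mul_of_nonneg_left (gk_mono (by linarith) hs.1.le hs.2) hC0
        have hsplit : (∫ s in (0:ℝ)..r, gk ((m:ℝ)*α) (r - s) • u m s)
            = (∫ s in (0:ℝ)..r, gk ((m:ℝ)*α) (r - s) • y m)
              + ∫ s in (0:ℝ)..r, gk ((m:ℝ)*α) (r - s) • W s := by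
          rw [← intervalIntegral.integral_add hI1 hI2]
          apply intervalIntegral.integral_congr
          intro s hs
          rw [uIcc_of_le hr] at hs
          show gk ((m:ℝ)*α) (r-s) • u m s = _
          rw [hu_eq m s hs.1, hres m (by omega) s hs.1, smul_add]
        have hassoc : (∫ s in (0:ℝ)..r, gk ((m:ℝ)*α) (r - s) • W s)
            = ∫ σ in (0:ℝ)..r, gk ((m:ℝ)*α + α) (r - σ) • u (m+1) σ :=
          gk_conv_assoc hmαpos hα hr (hu_cont (m+1))
        rw [ih (by omega) hmn' r hr, hsplit, gk_smul_const_integral hmαpos hr, hassoc,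
          Finset.sum_range_succ,
          show (((m+1:ℕ)):ℝ) * α = (m:ℝ)*α + α by push_cast; ring]
        abel
  -- derivative of the polynomial part
  have hd1 : HasDerivAt (fun r => ∑ k ∈ Finset.range n, gk ((k:ℝ)*α + 1) r • y k)
      (∑ k ∈ Finset.range n, (if k = 0 then 0 else gk ((k:ℝ)*α) t • y k)) t := by
    apply HasDerivAt.fun_sum
    intro k _
    by_cases hk0 : k = 0
    · subst hk0
      rw [if_pos rfl]
      apply (hasDerivAt_const t (y 0)).congr_of_eventuallyEq
      filter_upwards [Ioi_mem_nhds ht] with r hr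
      rw [show ((0:ℕ):ℝ)*α + 1 = 1 by push_cast; ring, gk_one_of_nonneg hr.le, one_smul]
    · rw [if_neg hk0]
      have hkpos : 0 < (k:ℝ)*α :=
        mul_pos (by exact_mod_cast Nat.pos_of_ne_zero hk0) hα
      exact hasDerivAt_gk_smul hkpos ht (y k)
  have hsum_eq : (∑ k ∈ Finset.range n, (if k = 0 then (0:X) else gk ((k:ℝ)*α) t • y k))
      = ∑ k ∈ Finset.Ico 1 n, gk ((k:ℝ)*α) t • y k := by
    rw [Finset.range_eq_Ico, ← Finset.sum_Ico_consecutive _ (by omega : 0 ≤ 1) (by omega : 1 ≤ n)]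
    have h01 : (∑ k ∈ Finset.Ico (0:ℕ) 1, (if k = 0 then (0:X) else gk ((k:ℝ)*α) t • y k)) = 0 := by
      rw [show Finset.Ico (0:ℕ) 1 = {0} by decide]
      simp
    rw [h01, zero_add]
    apply Finset.sum_congr rfl
    intro k hk
    rw [if_neg (by rw [Finset.mem_Ico] at hk; omega)]
  rw [hsum_eq] at hd1
  -- derivative of the convolution part, case split on nα = 1 or > 1
  rcases eq_or_lt_of_le hnα with heq | hlt
  · -- nα = 1
    have hprim := intervalIntegral.integral_hasDerivAt_right
      ((hu_cont n).intervalIntegrable 0 t)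
      ((hu_cont n).stronglyMeasurableAtFilter volume (𝓝 t))
      (hu_cont n).continuousAt
    have hd2 : HasDerivAt (fun r => ∫ s in (0:ℝ)..r, gk ((n:ℝ)*α) (r - s) • u n s)
        (u n t) t := by
      apply hprim.congr_of_eventuallyEq
      filter_upwards [Ioi_mem_nhds ht] with r hr
      apply intervalIntegral.integral_congr
      intro s hs
      rw [uIcc_of_le hr.le] at hs
      show gk ((n:ℝ)*α) (r-s) • u n s = u n s
      rw [← heq, gk_one_of_nonneg (by linarith [hs.2]), one_smul]
    have hD := hd1.add hd2
    have hfin : (∑ k ∈ Finset.Ico 1 n, gk ((k:ℝ)*α) t • y k) + u n t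
        = (∑ k ∈ Finset.Ico 1 n, gk ((k : ℝ) * α) t • (pApply A)^[k] x)
          + convK0 ((n : ℝ) * α - 1) (fun s => S s ((pApply A)^[n] x)) t := by
      congr 1
      rw [convK0, if_pos (by linarith : (n:ℝ)*α - 1 = 0)]
      exact hu_eq n t ht.le
    rw [← hfin]
    apply hD.congr_of_eventuallyEq
    filter_upwards [Ioi_mem_nhds ht] with r hr
    exact hid n (by omega) le_rfl r hr.le
  · -- nα > 1
    have hγ : 0 < (n:ℝ)*α - 1 := by linarith
    have hd2' := hasDerivAt_convK hγ (hu_cont n) ht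
    rw [show ((n:ℝ)*α - 1) + 1 = (n:ℝ)*α by ring] at hd2'
    have hD := hd1.add hd2'
    have hfin : (∑ k ∈ Finset.Ico 1 n, gk ((k:ℝ)*α) t • y k)
          + (∫ s in (0:ℝ)..t, gk ((n:ℝ)*α - 1) (t - s) • u n s)
        = (∑ k ∈ Finset.Ico 1 n, gk ((k : ℝ) * α) t • (pApply A)^[k] x)
          + convK0 ((n : ℝ) * α - 1) (fun s => S s ((pApply A)^[n] x)) t := by
      congr 1
      rw [convK0, if_neg (by linarith : ¬ ((n:ℝ)*α - 1 = 0))]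
      apply intervalIntegral.integral_congr
      intro s hs
      rw [uIcc_of_le ht.le] at hs
      show gk ((n:ℝ)*α - 1) (t-s) • u n s = gk ((n:ℝ)*α - 1) (t-s) • S s ((pApply A)^[n] x)
      rw [hu_eq n s hs.1]
    rw [← hfin]
    apply hD.congr_of_eventuallyEq
    filter_upwards [Ioi_mem_nhds ht] with r hr
    exact hid n (by omega) le_rfl r hr.le

end MainProof

/-- Lemma 4.5: if `A` generates an `α`-times resolvent family `S_α`
and `nα ≥ 1`, then for `x ∈ D(Aⁿ)` the map `t ↦ S_α(t)x` is differentiable on `(0,∞)`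
with `(d/dt) S_α(t)x = Σ_{k=1}^{n-1} g_{kα}(t) A^k x + (g_{nα-1} * S_α)(t) Aⁿ x`
(where `g_0 * S_α = S_α`). -/
theorem statement16 (A : X →ₗ.[ℂ] X) (α : ℝ) (hα : 0 < α) (n : ℕ)
    (hnα : 1 ≤ (n : ℝ) * α)
    (S : ℝ → X →L[ℂ] X) (hS : IsResolventFamily α A S)
    (x : X) (hx : ∀ k < n, (pApply A)^[k] x ∈ A.domain) :
    ∀ t : ℝ, 0 < t →
      HasDerivAt (fun r => S r x)
        ((∑ k ∈ Finset.Ico 1 n, gk ((k : ℝ) * α) t • (pApply A)^[k] x)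
          + convK0 ((n : ℝ) * α - 1) (fun s => S s ((pApply A)^[n] x)) t) t := by
  exact statement16' A α hα n hnα S hS x hx

end
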